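/- The function f(x) = log(1+x) - 2 + 3/(x+1) - 1/(x+1)² has exactly one root c* on (0, ∞); moreover f is negative on (0, c*) and positive on (c*, ∞), and 2 < c* < 3. -/

import Mathlib

noncomputable def fB (x : ℝ) : ℝ :=
  Real.log (1 + x) - 2 + 3 / (x + 1) - 1 / (x + 1) ^ 2

lemma fB_hasDeriv (x : ℝ) (hx : -1 < x) :
    HasDerivAt fB (x * (x - 1) / (x + 1) ^ 3) x := by
  have h1 : x + 1 ≠ 0 := by nlinarith
  have h1' : (1 : ℝ) + x ≠ 0 := by nlinarith
  have d2 : HasDerivAt (fun x : ℝ => x + 1) 1 x := (hasDerivAt_id x).add_const 1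
  have dlog : HasDerivAt (fun x : ℝ => Real.log (1 + x)) (1 / (1 + x)) x := by
    simpa using ((hasDerivAt_id x).const_add 1).log h1'
  have d3 : HasDerivAt (fun x : ℝ => 3 / (x + 1)) ((0 * (x + 1) - 3 * 1) / (x + 1) ^ 2) x :=
    (hasDerivAt_const x (3:ℝ)).div d2 h1
  have d4 : HasDerivAt (fun x : ℝ => (x + 1) ^ 2) (2 * (x + 1) ^ 1 * 1) x := d2.pow 2
  have h2 : (x + 1) ^ 2 ≠ 0 := pow_ne_zero 2 h1
  have d5 : HasDerivAt (fun x : ℝ => 1 / (x + 1) ^ 2)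
      ((0 * (x+1)^2 - 1 * (2 * (x + 1) ^ 1 * 1)) / ((x+1)^2)^2) x :=
    (hasDerivAt_const x (1:ℝ)).div d4 h2
  have := ((dlog.sub_const 2).add d3).sub d5
  refine this.congr_deriv ?_
  field_simp
  ring

lemma fB_contOn : ContinuousOn fB (Set.Ici (0:ℝ)) := fun x hx =>
  ((fB_hasDeriv x (by simp at hx; linarith)).continuousAt).continuousWithinAt

lemma fB_zero : fB 0 = 0 := by simp [fB]; norm_num

lemma fB_two : fB 2 < 0 := by
  have h3 : (3:ℝ) < Real.exp (10/9) := by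
    have he := Real.exp_one_gt_d9
    have h9 : (1/9 : ℝ) + 1 ≤ Real.exp (1/9) := Real.add_one_le_exp _
    have : Real.exp (10/9) = Real.exp 1 * Real.exp (1/9) := by
      rw [← Real.exp_add]; norm_num
    rw [this]
    nlinarith [Real.exp_pos (1/9 : ℝ)]
  have hlog : Real.log 3 < 10/9 := (Real.log_lt_iff_lt_exp (by norm_num)).2 h3
  have : fB 2 = Real.log 3 - 10/9 := by simp only [fB]; norm_num; ring
  linarith [this ▸ sub_neg.2 hlog]

lemma fB_three : 0 < fB 3 := by
  have h2 := Real.log_two_gt_d9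
  have h4 : Real.log 4 = 2 * Real.log 2 := by
    rw [show (4:ℝ) = 2^2 by norm_num, Real.log_pow]; norm_num
  have : fB 3 = Real.log 4 - 21/16 := by simp only [fB]; norm_num; ring
  rw [this, h4]; linarith

lemma fB_mono : StrictMonoOn fB (Set.Ici (1:ℝ)) := by
  apply strictMonoOn_of_deriv_pos (convex_Ici 1)
  · exact fB_contOn.mono (Set.Ici_subset_Ici.2 (by norm_num))
  · intro x hx
    rw [interior_Ici] at hx
    have hx1 : (1:ℝ) < x := hx
    rw [(fB_hasDeriv x (by linarith)).deriv]
    apply div_pos (by nlinarith) (by positivity)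

lemma fB_anti : StrictAntiOn fB (Set.Icc (0:ℝ) 1) := by
  apply strictAntiOn_of_deriv_neg (convex_Icc 0 1)
  · exact fB_contOn.mono (fun x hx => hx.1)
  · intro x hx
    rw [interior_Icc] at hx
    obtain ⟨h0, h1⟩ := hx
    rw [(fB_hasDeriv x (by linarith)).deriv]
    have : x * (x - 1) < 0 := mul_neg_of_pos_of_neg h0 (by linarith)
    apply div_neg_of_neg_of_pos this
    positivity

theorem stmt_17 :
    ∃ c : ℝ, 0 < c ∧ fB c = 0 ∧
      (∀ x : ℝ, 0 < x → x < c → fB x < 0) ∧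
      (∀ x : ℝ, c < x → 0 < fB x) ∧
      2 < c ∧ c < 3 ∧
      (∀ c' : ℝ, 0 < c' → fB c' = 0 → c' = c) := by
  have hIVT := intermediate_value_Ioo (by norm_num : (2:ℝ) ≤ 3)
    (fB_contOn.mono (by intro x hx; simp at hx ⊢; linarith [hx.1]))
  obtain ⟨c, hc, hfc⟩ := hIVT ⟨fB_two, fB_three⟩
  obtain ⟨hc2, hc3⟩ := hc
  have hc0 : (0:ℝ) < c := by linarith
  have hneg : ∀ x : ℝ, 0 < x → x < c → fB x < 0 := by
    intro x hx0 hxc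
    rcases le_or_gt x 1 with h | h
    · have := fB_anti (Set.mem_Icc.2 ⟨le_refl 0, by norm_num⟩)
        (Set.mem_Icc.2 ⟨le_of_lt hx0, h⟩) hx0
      rw [fB_zero] at this; linarith
    · have := fB_mono (Set.mem_Ici.2 (le_of_lt h)) (Set.mem_Ici.2 (by linarith)) hxc
      linarith [hfc ▸ this]
  have hpos : ∀ x : ℝ, c < x → 0 < fB x := by
    intro x hcx
    have := fB_mono (Set.mem_Ici.2 (by linarith : (1:ℝ) ≤ c))
      (Set.mem_Ici.2 (by linarith)) hcx
    linarith [hfc ▸ this]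
  refine ⟨c, hc0, hfc, hneg, hpos, hc2, hc3, ?_⟩
  intro c' hc'0 hfc'
  by_contra hne
  rcases lt_or_gt_of_ne hne with h | h
  · exact absurd hfc' (ne_of_lt (hneg c' hc'0 h))
  · exact absurd hfc' (ne_of_gt (hpos c' h))
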